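/- arXiv:2102.10876 — 2 statements merged into one kernel-verified Lean document; each statement's English description precedes it below -/
import Mathlib

section
/- Let G be a finite group with |G| > 1, let C be a transitive inverse-closed generating set of G, and write Φ = Φ(G;C). Then there exist k ≥ 1 and N_1, …, N_k ∈ A_max(G;C) such that: (i) Φ = ⋂_{i=1}^k N_i and the map gΦ ↦ (gN_1, …, gN_k) is a group isomorphism from G/Φ onto the direct product ∏_{i=1}^k G/N_i; (ii) for each i ≤ k, the quotient G/N_i is a nontrivial characteristically simple group (its only characteristic subgroups are the trivial subgroup and the whole group), the image CN_i/N_i is a transitive inverse-closed generating set of G/N_i, and A(G/N_i; CN_i/N_i) consists only of the trivial subgroup. -/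
namespace NETCayley

variable {G : Type*} [Group G]

/-- `Aut(G;C)`: the subgroup of `MulAut G` consisting of automorphisms `σ` with `C^σ = C`. -/
def autSub (C : Set G) : Subgroup (MulAut G) where
  carrier := {σ : MulAut G | ⇑σ '' C = C}
  one_mem' := by simp
  mul_mem' := by
    intro a b ha hb
    rw [Set.mem_setOf_eq] at ha hb ⊢
    have h : ⇑(a * b) = ⇑a ∘ ⇑b := rfl
    rw [h, Set.image_comp, hb, ha]
  inv_mem' := by
    intro a ha
    rw [Set.mem_setOf_eq] at ha ⊢
    conv_lhs => rw [← ha]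
    rw [← Set.image_comp]
    have h : ⇑a⁻¹ ∘ ⇑a = id := by funext x; simp
    rw [h, Set.image_id]

/-- `A(G;C)`: proper normal `Aut(G;C)`-invariant subgroups of `G`. -/
def setA (C : Set G) : Set (Subgroup G) :=
  {N | N.Normal ∧ N ≠ ⊤ ∧ ∀ σ ∈ autSub C, N.map (σ : MulAut G).toMonoidHom = N}

/-- `A_max(G;C)`: maximal (by inclusion) elements of `A(G;C)`. -/
def setAmax (C : Set G) : Set (Subgroup G) :=
  {N | N ∈ setA C ∧ ∀ M ∈ setA C, N ≤ M → N = M}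

/-- `Φ(G;C)`: the intersection of all members of `A_max(G;C)`. -/
def PhiC (C : Set G) : Subgroup G := sInf (setAmax C)

/-- `X` is normal `C`-closed: `(x^g)^σ ∈ X` for all `x ∈ X`, `g ∈ G`, `σ ∈ Aut(G;C)`. -/
def NormalCClosed (C X : Set G) : Prop :=
  ∀ x ∈ X, ∀ g : G, ∀ σ ∈ autSub C, σ (g⁻¹ * x * g) ∈ X

/-- The normal `C`-closure of `X`: `{(x^g)^σ : x ∈ X, g ∈ G, σ ∈ Aut(G;C)}`. -/
def normalCClosure (C X : Set G) : Set G :=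
  {y | ∃ x ∈ X, ∃ g : G, ∃ σ ∈ autSub C, σ (g⁻¹ * x * g) = y}

/-- The orbit of `c` under the natural action of `Aut(G;C)`. -/
def orbitC (C : Set G) (c : G) : Set G := {y | ∃ σ ∈ autSub C, σ c = y}

/-- `C` is a transitive set: either `Aut(G;C)` is transitive on `C`, or there are exactly two
orbits `C₊`, `C₋` on `C` with `C = C₊ ∪ C₋` and `C₋ = C₊⁻¹`. -/
def TransSet (C : Set G) : Prop :=
  (∀ c ∈ C, ∀ c' ∈ C, ∃ σ ∈ autSub C, σ c = c') ∨
  (∃ cp ∈ C, ∃ cm ∈ C, orbitC C cp ≠ orbitC C cm ∧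
    C = orbitC C cp ∪ orbitC C cm ∧ orbitC C cm = (orbitC C cp)⁻¹)

/-- A transitive inverse-closed generating set of `G`. -/
def IsTransGenSet (C : Set G) : Prop :=
  (1 : G) ∉ C ∧ (∀ c ∈ C, c⁻¹ ∈ C) ∧ Subgroup.closure C = ⊤ ∧ TransSet C



section Lemmas

variable {C : Set G}

lemma mem_autSub {σ : MulAut G} : σ ∈ autSub C ↔ ⇑σ '' C = C := Iff.rfl

lemma apply_mem_iff {N : Subgroup G}
    (hinv : ∀ σ ∈ autSub C, N.map (σ : MulAut G).toMonoidHom = N)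
    {σ : MulAut G} (hσ : σ ∈ autSub C) {g : G} : σ g ∈ N ↔ g ∈ N := by
  constructor
  · intro h
    have hσ' := (autSub C).inv_mem hσ
    rw [← hinv σ⁻¹ hσ', Subgroup.mem_map]
    exact ⟨σ g, h, by simp⟩
  · intro h
    rw [← hinv σ hσ, Subgroup.mem_map]
    exact ⟨g, h, rfl⟩

lemma map_eq_of_apply_mem {N : Subgroup G}
    (h : ∀ σ ∈ autSub C, ∀ g, g ∈ N → σ g ∈ N) :
    ∀ σ ∈ autSub C, N.map (σ : MulAut G).toMonoidHom = N := by
  intro σ hσ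
  apply le_antisymm
  · intro x hx
    rw [Subgroup.mem_map] at hx
    obtain ⟨g, hg, rfl⟩ := hx
    exact h σ hσ g hg
  · intro g hg
    rw [Subgroup.mem_map]
    exact ⟨σ⁻¹ g, h σ⁻¹ ((autSub C).inv_mem hσ) g hg, by simp⟩

lemma self_mem_orbitC (C : Set G) (c : G) : c ∈ orbitC C c :=
  ⟨1, (autSub C).one_mem, rfl⟩

lemma orbitC_subset {c : G} (hc : c ∈ C) : orbitC C c ⊆ C := by
  rintro y ⟨σ, hσ, rfl⟩
  have : σ c ∈ ⇑σ '' C := ⟨c, hc, rfl⟩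
  rwa [mem_autSub.mp hσ] at this

lemma orbitC_eq_of_mem {c y : G} (hy : y ∈ orbitC C c) :
    orbitC C y = orbitC C c := by
  obtain ⟨σ, hσ, rfl⟩ := hy
  ext z
  constructor
  · rintro ⟨τ, hτ, rfl⟩
    exact ⟨τ * σ, (autSub C).mul_mem hτ hσ, rfl⟩
  · rintro ⟨τ, hτ, rfl⟩
    refine ⟨τ * σ⁻¹, (autSub C).mul_mem hτ ((autSub C).inv_mem hσ), ?_⟩
    show τ (σ⁻¹ (σ c)) = τ c
    congr 1
    simp

lemma orbitC_inv (C : Set G) (c : G) : orbitC C c⁻¹ = (orbitC C c)⁻¹ := by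
  ext z
  simp only [Set.mem_inv]
  constructor
  · rintro ⟨σ, hσ, rfl⟩
    exact ⟨σ, hσ, by simp⟩
  · rintro ⟨σ, hσ, hz⟩
    exact ⟨σ, hσ, by rw [map_inv, hz, inv_inv]⟩

/-- No element of `C` lies in a member of `A(G;C)`. -/
lemma not_mem_of_setA (hC : IsTransGenSet C) {N : Subgroup G} (hN : N ∈ setA C) :
    ∀ c ∈ C, c ∉ N := by
  obtain ⟨h1, hinvC, hgen, htr⟩ := hC
  obtain ⟨hnorm, hne, hinv⟩ := hN
  intro c hc hcN
  have horbN : ∀ x c' : G, c' ∈ (N : Set G) → x ∈ orbitC C c' → x ∈ N := by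
    rintro x c' hc' ⟨σ, hσ, rfl⟩
    exact (apply_mem_iff hinv hσ).2 hc'
  have key : C ⊆ (N : Set G) := by
    rcases htr with htrans | ⟨cp, hcp, cm, hcm, hneq, hcov, hinv2⟩
    · intro c' hc'
      obtain ⟨σ, hσ, he⟩ := htrans c hc c' hc'
      exact he ▸ (apply_mem_iff hinv hσ).2 hcN
    · have hinv2' : orbitC C cp = (orbitC C cm)⁻¹ := by
        rw [hinv2, inv_inv]
      have horbsub : ∀ d : G, c ∈ orbitC C d → orbitC C d ⊆ (N : Set G) := by
        intro d hd x hx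
        rw [← orbitC_eq_of_mem hd] at hx
        exact horbN x c hcN hx
      have hinvsub : ∀ s : Set G, s ⊆ (N : Set G) → s⁻¹ ⊆ (N : Set G) := by
        intro s hs x hx
        rw [Set.mem_inv] at hx
        have := hs hx
        simpa using N.inv_mem this
      rw [hcov]
      have hcC := hc
      rw [hcov] at hcC
      rcases hcC with hcp' | hcm'
      · apply Set.union_subset (horbsub cp hcp')
        rw [hinv2]
        exact hinvsub _ (horbsub cp hcp')
      · apply Set.union_subset _ (horbsub cm hcm')
        rw [hinv2']
        exact hinvsub _ (horbsub cm hcm')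
  have : (⊤ : Subgroup G) ≤ N := hgen ▸ (Subgroup.closure_le N).2 key
  exact hne (top_le_iff.mp this)

lemma bot_mem_setA [Nontrivial G] (C : Set G) : (⊥ : Subgroup G) ∈ setA C := by
  refine ⟨inferInstance, bot_ne_top, map_eq_of_apply_mem ?_⟩
  intro σ hσ g hg
  rw [Subgroup.mem_bot] at hg ⊢
  rw [hg, map_one]

lemma exists_max [Finite G] {N : Subgroup G} (hN : N ∈ setA C) :
    ∃ M ∈ setAmax C, N ≤ M := by
  haveI : Finite (Subgroup G) := Finite.of_injective (fun H => (H : Set G)) SetLike.coe_injective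
  obtain ⟨M, hM, hmax⟩ := Set.Finite.exists_maximalFor id {M | M ∈ setA C ∧ N ≤ M}
    (Set.toFinite _) ⟨N, hN, le_rfl⟩
  refine ⟨M, ⟨hM.1, ?_⟩, hM.2⟩
  intro K hK hMK
  exact le_antisymm hMK (hmax ⟨hK, le_trans hM.2 hMK⟩ hMK)

lemma setAmax_nonempty [Finite G] [Nontrivial G] (C : Set G) : ∃ M, M ∈ setAmax C := by
  obtain ⟨M, hM, _⟩ := exists_max (bot_mem_setA C)
  exact ⟨M, hM⟩

lemma PhiC_ne_top [Finite G] [Nontrivial G] (C : Set G) : PhiC C ≠ ⊤ := by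
  obtain ⟨M, hM⟩ := setAmax_nonempty C
  intro h
  have hle : PhiC C ≤ M := sInf_le hM
  rw [h] at hle
  exact hM.1.2.1 (top_le_iff.mp hle)

lemma PhiC_normal (C : Set G) : (PhiC C).Normal := by
  constructor
  intro n hn g
  rw [PhiC, Subgroup.mem_sInf] at hn ⊢
  intro M hM
  exact Subgroup.Normal.conj_mem hM.1.1 n (hn M hM) g

section Quot

variable {N : Subgroup G} [nN : N.Normal]

lemma quot_nontrivial (h : N ≠ ⊤) : Nontrivial (G ⧸ N) := by
  obtain ⟨g, hg⟩ : ∃ g, g ∉ N := by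
    by_contra hh
    push_neg at hh
    exact h ((Subgroup.eq_top_iff' N).mpr hh)
  exact ⟨⟨QuotientGroup.mk g, 1, fun he => hg ((QuotientGroup.eq_one_iff g).mp he)⟩⟩

lemma exists_lift_aut (hinv : ∀ σ ∈ autSub C, N.map (σ : MulAut G).toMonoidHom = N)
    {σ : MulAut G} (hσ : σ ∈ autSub C) :
    ∃ τ : MulAut (G ⧸ N), τ ∈ autSub (QuotientGroup.mk '' C : Set (G ⧸ N)) ∧
      ∀ g : G, τ (QuotientGroup.mk g) = QuotientGroup.mk (σ g) := by
  refine ⟨QuotientGroup.congr N N σ (hinv σ hσ), ?_,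
    fun g => QuotientGroup.congr_mk N N σ (hinv σ hσ) g⟩
  rw [mem_autSub, ← Set.image_comp]
  have hc : ⇑(QuotientGroup.congr N N σ (hinv σ hσ)) ∘ (QuotientGroup.mk : G → G ⧸ N)
      = QuotientGroup.mk ∘ ⇑σ := by
    funext x
    exact QuotientGroup.congr_mk N N σ (hinv σ hσ) x
  rw [hc, Set.image_comp, mem_autSub.mp hσ]

lemma setA_image_eq [Finite G] (hC : IsTransGenSet C) (hN : N ∈ setAmax C) :
    setA (QuotientGroup.mk '' C : Set (G ⧸ N)) = {⊥} := by
  haveI : Nontrivial (G ⧸ N) := quot_nontrivial hN.1.2.1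
  apply Set.eq_singleton_iff_unique_mem.mpr
  refine ⟨bot_mem_setA _, ?_⟩
  intro M hM
  set K := Subgroup.comap (QuotientGroup.mk' N) M with hK
  have hM' : M = Subgroup.map (QuotientGroup.mk' N) K :=
    (Subgroup.map_comap_eq_self_of_surjective (QuotientGroup.mk'_surjective N) M).symm
  have hKA : K ∈ setA C := by
    refine ⟨?_, ?_, map_eq_of_apply_mem ?_⟩
    · haveI := hM.1
      exact Subgroup.normal_comap _
    · intro htop
      apply hM.2.1
      rw [hM', htop]
      exact Subgroup.map_top_of_surjective _ (QuotientGroup.mk'_surjective N)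
    · intro σ hσ g hg
      obtain ⟨τ, hτ, hτe⟩ := exists_lift_aut hN.1.2.2 hσ
      rw [hK, Subgroup.mem_comap, QuotientGroup.mk'_apply] at hg ⊢
      have h2 : τ (QuotientGroup.mk g) ∈ M := (apply_mem_iff hM.2.2 hτ).2 hg
      rwa [hτe] at h2
  have hle : N ≤ K := by
    intro n hn
    rw [hK, Subgroup.mem_comap, QuotientGroup.mk'_apply]
    have h1 : (QuotientGroup.mk n : G ⧸ N) = 1 := (QuotientGroup.eq_one_iff n).mpr hn
    rw [h1]
    exact M.one_mem
  have hNK : N = K := hN.2 K hKA hle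
  rw [hM', ← hNK]
  apply le_antisymm
  · intro x hx
    rw [Subgroup.mem_map] at hx
    obtain ⟨n, hn, rfl⟩ := hx
    rw [Subgroup.mem_bot, QuotientGroup.mk'_apply, QuotientGroup.eq_one_iff]
    exact hn
  · exact bot_le

lemma image_isTransGenSet (hC : IsTransGenSet C) (hN : N ∈ setA C) :
    IsTransGenSet (QuotientGroup.mk '' C : Set (G ⧸ N)) := by
  obtain ⟨h1, hinvC, hgen, htr⟩ := hC
  have hinv := hN.2.2
  refine ⟨?_, ?_, ?_, ?_⟩
  · rintro ⟨c, hc, hce⟩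
    exact not_mem_of_setA ⟨h1, hinvC, hgen, htr⟩ hN c hc ((QuotientGroup.eq_one_iff c).mp hce)
  · rintro x ⟨c, hc, rfl⟩
    exact ⟨c⁻¹, hinvC c hc, by simp⟩
  · have h2 : (QuotientGroup.mk : G → G ⧸ N) '' C = ⇑(QuotientGroup.mk' N) '' C := by
      rw [QuotientGroup.coe_mk']
    rw [h2, ← MonoidHom.map_closure, hgen]
    exact Subgroup.map_top_of_surjective _ (QuotientGroup.mk'_surjective N)
  · set Cb : Set (G ⧸ N) := QuotientGroup.mk '' C with hCb
    have lift : ∀ σ ∈ autSub C, ∃ τ : MulAut (G ⧸ N), τ ∈ autSub Cb ∧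
        ∀ g : G, τ (QuotientGroup.mk g) = QuotientGroup.mk (σ g) :=
      fun σ hσ => exists_lift_aut hinv hσ
    have auxcomp : ∀ (τ1 τ2 : MulAut (G ⧸ N)) (x y z : G ⧸ N), τ1 z = x → τ2 z = y →
        (τ2 * τ1⁻¹) x = y := by
      intro τ1 τ2 x y z h1' h2'
      subst h1'
      subst h2'
      show τ2 (τ1⁻¹ (τ1 z)) = τ2 z
      congr 1
      simp
    rcases htr with htrans | ⟨cp, hcp, cm, hcm, hneq, hcov, hinv2⟩
    · left
      rintro x ⟨c, hc, rfl⟩ y ⟨c', hc', rfl⟩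
      obtain ⟨σ, hσ, he⟩ := htrans c hc c' hc'
      obtain ⟨τ, hτ, hτe⟩ := lift σ hσ
      exact ⟨τ, hτ, by rw [hτe, he]⟩
    · have hmem : ∀ c₀ ∈ C, (QuotientGroup.mk c₀ : G ⧸ N) ∈ Cb := fun c₀ h => ⟨c₀, h, rfl⟩
      have hrep : ∀ x ∈ Cb, x ∈ orbitC Cb (QuotientGroup.mk cp) ∨
          x ∈ orbitC Cb (QuotientGroup.mk cm) := by
        rintro x ⟨c, hc, rfl⟩
        rw [hcov] at hc
        rcases hc with h | h
        · obtain ⟨σ, hσ, rfl⟩ := h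
          obtain ⟨τ, hτ, hτe⟩ := lift σ hσ
          exact Or.inl ⟨τ, hτ, hτe cp⟩
        · obtain ⟨σ, hσ, rfl⟩ := h
          obtain ⟨τ, hτ, hτe⟩ := lift σ hσ
          exact Or.inr ⟨τ, hτ, hτe cm⟩
      by_cases horb : orbitC Cb (QuotientGroup.mk cp) = orbitC Cb (QuotientGroup.mk cm)
      · left
        have hall : ∀ x ∈ Cb, x ∈ orbitC Cb (QuotientGroup.mk cp) := by
          intro x hx
          rcases hrep x hx with h | h
          · exact h
          · rwa [horb]
        intro x hx y hy
        obtain ⟨τ1, hτ1, he1⟩ := hall x hx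
        obtain ⟨τ2, hτ2, he2⟩ := hall y hy
        exact ⟨τ2 * τ1⁻¹, (autSub Cb).mul_mem hτ2 ((autSub Cb).inv_mem hτ1),
          auxcomp τ1 τ2 x y _ he1 he2⟩
      · right
        refine ⟨QuotientGroup.mk cp, hmem cp hcp, QuotientGroup.mk cm, hmem cm hcm, horb, ?_, ?_⟩
        · apply Set.Subset.antisymm
          · intro x hx
            exact hrep x hx
          · apply Set.union_subset
            · exact orbitC_subset (hmem cp hcp)
            · exact orbitC_subset (hmem cm hcm)
        · have h1' : cm⁻¹ ∈ orbitC C cp := by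
            have h0 : cm ∈ (orbitC C cp)⁻¹ := hinv2 ▸ self_mem_orbitC C cm
            rwa [Set.mem_inv] at h0
          obtain ⟨σ, hσ, he⟩ := h1'
          obtain ⟨τ, hτ, hτe⟩ := lift σ hσ
          have h3' : ((QuotientGroup.mk cm : G ⧸ N)) ∈ (orbitC Cb (QuotientGroup.mk cp))⁻¹ := by
            rw [Set.mem_inv]
            refine ⟨τ, hτ, ?_⟩
            rw [hτe cp, he]
            simp
          rw [← orbitC_inv] at h3'
          rw [orbitC_eq_of_mem h3', orbitC_inv]

end Quot

end Lemmas

/-- There exist `k ≥ 1` and `N₁, …, N_k ∈ A_max(G;C)` with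
`Φ(G;C) = ⋂ᵢ Nᵢ`, `G/Φ ≅ ∏ᵢ G/Nᵢ` via `gΦ ↦ (gN₁, …, gN_k)`, and each `G/Nᵢ` a nontrivial
characteristically simple group for which the image of `C` is a transitive inverse-closed
generating set with `A(G/Nᵢ; CNᵢ/Nᵢ) = {⊥}`. -/
theorem stmt6 {G : Type*} [Group G] [Finite G] [Nontrivial G] (C : Set G)
    (hC : IsTransGenSet C) :
    ∃ (k : ℕ), 1 ≤ k ∧ ∃ (N : Fin k → Subgroup G) (hN : ∀ i, (N i).Normal),
      (∀ i, N i ∈ setAmax C) ∧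
      PhiC C = ⨅ i, N i ∧
      (∃ e : (G ⧸ PhiC C) ≃ ∀ i, G ⧸ N i,
        ∀ g : G, e (QuotientGroup.mk g) = fun i => QuotientGroup.mk g) ∧
      (∀ i : Fin k,
        haveI := hN i
        Nontrivial (G ⧸ N i) ∧
        (∀ H : Subgroup (G ⧸ N i),
          (∀ σ : MulAut (G ⧸ N i), H.map σ.toMonoidHom = H) → H = ⊥ ∨ H = ⊤) ∧
        IsTransGenSet (QuotientGroup.mk '' C : Set (G ⧸ N i)) ∧
        setA (QuotientGroup.mk '' C : Set (G ⧸ N i)) = {⊥}) := by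
  classical
  -- existence of some finite family of members of `setAmax C` with intersection `PhiC C`
  have hex : ∃ n : ℕ, ∃ N : Fin n → Subgroup G,
      (∀ i, N i ∈ setAmax C) ∧ (⨅ i, N i) = PhiC C := by
    haveI : Finite (Subgroup G) := Finite.of_injective (fun H => (H : Set G)) SetLike.coe_injective
    haveI : Fintype ↥(setAmax C) := Fintype.ofFinite _
    refine ⟨Fintype.card ↥(setAmax C),
      fun i => ((Fintype.equivFin ↥(setAmax C)).symm i : Subgroup G), ?_, ?_⟩
    · intro i
      exact ((Fintype.equivFin ↥(setAmax C)).symm i).2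
    · ext g
      rw [Subgroup.mem_iInf, PhiC, Subgroup.mem_sInf]
      constructor
      · intro h M hM
        have h2 := h ((Fintype.equivFin ↥(setAmax C)) ⟨M, hM⟩)
        simpa using h2
      · intro h i
        exact h _ ((Fintype.equivFin ↥(setAmax C)).symm i).2
  obtain ⟨N, hNmax, hNinf⟩ := Nat.find_spec hex
  have hk1 : 1 ≤ Nat.find hex := by
    rw [Nat.one_le_iff_ne_zero, Ne, Nat.find_eq_zero]
    rintro ⟨N0, -, hinf0⟩
    exact PhiC_ne_top C (hinf0 ▸ iInf_of_empty N0)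
  haveI hNin : ∀ i, (N i).Normal := fun i => (hNmax i).1.1
  have hPhiIff : ∀ g : G, g ∈ PhiC C ↔ ∀ l, g ∈ N l := by
    intro g
    have h0 := Subgroup.mem_iInf (S := N) (x := g)
    rw [hNinf] at h0
    exact h0
  -- the complementary intersections
  set M : Fin (Nat.find hex) → Subgroup G := fun i => ⨅ j, ⨅ (_ : j ≠ i), N j with hMdef
  have hMmem : ∀ (i : Fin (Nat.find hex)) (g : G), g ∈ M i ↔ ∀ j, j ≠ i → g ∈ N j := by
    intro i g
    simp [hMdef, Subgroup.mem_iInf]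
  -- minimality: no M i is contained in N i
  have hnotle : ∀ i, ¬ (M i ≤ N i) := by
    intro i hle
    have hklt : Nat.find hex - 1 < Nat.find hex := by omega
    apply Nat.find_min hex hklt
    have hcast : Nat.find hex - 1 + 1 = Nat.find hex := by omega
    let e : Fin (Nat.find hex - 1 + 1) ≃ Fin (Nat.find hex) := finCongr hcast
    refine ⟨fun j => N (e ((e.symm i).succAbove j)), fun j => hNmax _, ?_⟩
    ext g
    rw [Subgroup.mem_iInf, hPhiIff g]
    constructor
    · intro hg
      have hgl : ∀ l, l ≠ i → g ∈ N l := by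
        intro l hl
        obtain ⟨j, hj⟩ := Fin.exists_succAbove_eq
          (show e.symm l ≠ e.symm i from fun h => hl (by simpa using congrArg e h))
        have h2 := hg j
        rw [hj, Equiv.apply_symm_apply] at h2
        exact h2
      intro l
      by_cases hl : l = i
      · subst hl
        exact hle ((hMmem l g).mpr hgl)
      · exact hgl l hl
    · intro hg j
      exact hg _
  -- each N i together with M i generates G
  have hMnormal : ∀ i, (M i).Normal := by
    intro i
    constructor
    intro n hn g
    rw [hMmem] at hn ⊢
    intro j hj
    exact Subgroup.Normal.conj_mem (hNmax j).1.1 n (hn j hj) g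
  have hMinv : ∀ i, ∀ σ ∈ autSub C, (M i).map (σ : MulAut G).toMonoidHom = M i := by
    intro i
    apply map_eq_of_apply_mem
    intro σ hσ g hg
    rw [hMmem] at hg ⊢
    intro j hj
    exact (apply_mem_iff (hNmax j).1.2.2 hσ).2 (hg j hj)
  have htop : ∀ i, N i ⊔ M i = ⊤ := by
    intro i
    by_contra hne
    have hsupA : N i ⊔ M i ∈ setA C := by
      haveI := (hNmax i).1.1
      haveI := hMnormal i
      refine ⟨inferInstance, hne, fun σ hσ => ?_⟩
      rw [Subgroup.map_sup, (hNmax i).1.2.2 σ hσ, hMinv i σ hσ]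
    have heq := (hNmax i).2 _ hsupA le_sup_left
    have h2 : M i ≤ N i := by
      rw [heq]
      exact le_sup_right
    exact hnotle i h2
  -- build the equivalence
  haveI hPhiN : (PhiC C).Normal := PhiC_normal C
  have hle : ∀ i, PhiC C ≤ Subgroup.comap (MonoidHom.id G) (N i) := by
    intro i g hg
    rw [Subgroup.mem_comap]
    exact (hPhiIff g).mp hg i
  set Fb : (G ⧸ PhiC C) → ∀ i, G ⧸ N i :=
    fun q i => QuotientGroup.map (PhiC C) (N i) (MonoidHom.id G) (hle i) q with hFbdef
  have hFbmk : ∀ g : G, Fb (QuotientGroup.mk g) = fun i => QuotientGroup.mk g := by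
    intro g
    funext i
    rw [hFbdef]
    exact QuotientGroup.map_mk (PhiC C) (N i) (MonoidHom.id G) (hle i) g
  have hinj : Function.Injective Fb := by
    intro q q' h
    revert h
    refine QuotientGroup.induction_on q (fun a => QuotientGroup.induction_on q' (fun b h => ?_))
    have h2 : ∀ i, (QuotientGroup.mk a : G ⧸ N i) = QuotientGroup.mk b := by
      intro i
      calc (QuotientGroup.mk a : G ⧸ N i) = Fb (QuotientGroup.mk a) i := by rw [hFbmk a]
        _ = Fb (QuotientGroup.mk b) i := by rw [h]
        _ = QuotientGroup.mk b := by rw [hFbmk b]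
    have h3 : a⁻¹ * b ∈ PhiC C :=
      (hPhiIff _).mpr fun i => QuotientGroup.eq.mp (h2 i)
    exact QuotientGroup.eq.mpr h3
  have hMsurj : ∀ j (q : G ⧸ N j), ∃ y, y ∈ M j ∧ (QuotientGroup.mk y : G ⧸ N j) = q := by
    intro j q
    haveI := hMnormal j
    obtain ⟨a, rfl⟩ := QuotientGroup.mk_surjective q
    have hamem : a ∈ (↑(N j ⊔ M j) : Set G) := by
      rw [htop j]
      exact Subgroup.mem_top a
    rw [Subgroup.mul_normal] at hamem
    obtain ⟨n, hn, m, hm, hnm⟩ := hamem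
    have hnm' : n * m = a := hnm
    have hn' : n ∈ N j := hn
    have hm' : m ∈ M j := hm
    refine ⟨m, hm', ?_⟩
    apply QuotientGroup.eq.mpr
    have hincl : m⁻¹ * a = m⁻¹ * n * m := by
      rw [← hnm']
      group
    rw [hincl]
    have h5 := (hNin j).conj_mem n hn' m⁻¹
    simpa using h5
  have hsurj : Function.Surjective Fb := by
    intro t
    have key : ∀ s : Finset (Fin (Nat.find hex)), ∃ g : G,
        ∀ i ∈ s, (QuotientGroup.mk g : G ⧸ N i) = t i := by
      intro s
      induction s using Finset.induction_on with
      | empty => exact ⟨1, fun i hi => absurd hi (Finset.notMem_empty i)⟩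
      | @insert j s hj ih =>
        obtain ⟨g, hg⟩ := ih
        obtain ⟨y, hy, hyq⟩ := hMsurj j ((QuotientGroup.mk g : G ⧸ N j)⁻¹ * t j)
        refine ⟨g * y, ?_⟩
        intro i hi
        rcases Finset.mem_insert.mp hi with rfl | his
        · rw [QuotientGroup.mk_mul, hyq]
          group
        · have hy1 : (QuotientGroup.mk y : G ⧸ N i) = 1 := by
            rw [QuotientGroup.eq_one_iff]
            exact (hMmem j y).mp hy i (fun h => hj (h ▸ his))
          rw [QuotientGroup.mk_mul, hy1, mul_one]
          exact hg i his
    obtain ⟨g, hg⟩ := key Finset.univ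
    refine ⟨QuotientGroup.mk g, ?_⟩
    funext i
    calc Fb (QuotientGroup.mk g) i = QuotientGroup.mk g := congrFun (hFbmk g) i
      _ = t i := hg i (Finset.mem_univ i)
  -- assemble
  refine ⟨Nat.find hex, hk1, N, fun i => (hNmax i).1.1, hNmax, hNinf.symm,
    ⟨Equiv.ofBijective Fb ⟨hinj, hsurj⟩, fun g => hFbmk g⟩, ?_⟩
  intro i
  haveI hNi : (N i).Normal := (hNmax i).1.1
  refine ⟨quot_nontrivial (hNmax i).1.2.1, ?_, image_isTransGenSet hC (hNmax i).1,
    setA_image_eq hC (hNmax i)⟩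
  intro H hH
  by_cases ht : H = ⊤
  · exact Or.inr ht
  · left
    have hHA : H ∈ setA (QuotientGroup.mk '' C : Set (G ⧸ N i)) := by
      refine ⟨?_, ht, fun σ _ => hH σ⟩
      constructor
      intro n hn g
      have h2 : (MulAut.conj g) n ∈ H := by
        rw [← hH (MulAut.conj g), Subgroup.mem_map]
        exact ⟨n, hn, rfl⟩
      simpa [MulAut.conj_apply] using h2
    rw [setA_image_eq hC (hNmax i)] at hHA
    exact hHA

end NETCayley
end

section
/- Let n ≥ 3, let G = D_{2n} = ⟨a, b | a^n = b^2 = 1, bab = a^{-1}⟩, let C be a transitive inverse-closed generating set of G, let A_0 = Aut(G;C), let r be the divisor of n with A_0 ∩ ⟨φ⟩ = ⟨φ^r⟩, and suppose C = b⟨a^r⟩ ∪ ba^i⟨a^r⟩ for some i with 1 ≤ i ≤ r-1. Then gcd(i,r) = 1, and there exists a positive integer k < n with gcd(k,n) = 1 and r dividing k+1, such that the subgroup ⟨φ^r, τ_kφ^i⟩ of A_0 acts transitively on C. In particular, if r = n (so that C = {b, ba^i}), then there exists σ ∈ Aut(G) with C^σ = {b, ba}, and Aut(G;C^σ) = ⟨τ_{n-1}φ⟩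 is cyclic of order 2. -/
namespace NETCayley

variable {G : Type*} [Group G]

/-- The map underlying the automorphism `τ_k φ^m` of the dihedral group:
`a^i ↦ a^{ki}`, `b a^i ↦ b a^{ki+m}`. -/
def dihMap (n : ℕ) (k m : ZMod n) : DihedralGroup n → DihedralGroup n
  | .r i => .r (k * i)
  | .sr i => .sr (k * i + m)

/-- The automorphism `τ_k φ^m` of the dihedral group (for `k` a unit mod `n`). -/
def dihAut (n : ℕ) (k : (ZMod n)ˣ) (m : ZMod n) : MulAut (DihedralGroup n) where
  toFun := dihMap n (k : ZMod n) m
  invFun := dihMap n ((k⁻¹ : (ZMod n)ˣ) : ZMod n) (-(((k⁻¹ : (ZMod n)ˣ) : ZMod n) * m))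
  left_inv := by
    have hk : ((k⁻¹ : (ZMod n)ˣ) : ZMod n) * ((k : (ZMod n)ˣ) : ZMod n) = 1 := k.inv_mul
    rintro (i | i) <;> simp only [dihMap] <;> congr 1 <;> linear_combination (i : ZMod n) * hk
  right_inv := by
    have hk : ((k : (ZMod n)ˣ) : ZMod n) * ((k⁻¹ : (ZMod n)ˣ) : ZMod n) = 1 := k.mul_inv
    rintro (i | i) <;> simp only [dihMap] <;> congr 1
    · linear_combination (i : ZMod n) * hk
    · linear_combination ((i : ZMod n) - m) * hk
  map_mul' := by
    rintro (i | i) (j | j) <;>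
      simp only [DihedralGroup.r_mul_r, DihedralGroup.r_mul_sr, DihedralGroup.sr_mul_r,
        DihedralGroup.sr_mul_sr, dihMap] <;> congr 1 <;> ring


/-- The coset `b a^i ⟨a^r⟩ = {b a^{i + tr} : t ∈ ℤ}` of reflections in the dihedral group. -/
def reflCoset (n r i : ℕ) : Set (DihedralGroup n) :=
  {x | ∃ t : ℤ, x = DihedralGroup.sr ((i : ZMod n) + (t : ZMod n) * (r : ZMod n))}


section Aux
variable (n : ℕ)

lemma dihAut_sr (k : (ZMod n)ˣ) (m x : ZMod n) :
    dihAut n k m (.sr x) = .sr ((k : ZMod n) * x + m) := rfl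

lemma dihAut_r (k : (ZMod n)ˣ) (m x : ZMod n) :
    dihAut n k m (.r x) = .r ((k : ZMod n) * x) := rfl

lemma dihAut_mul (k k' : (ZMod n)ˣ) (m m' : ZMod n) :
    dihAut n k m * dihAut n k' m' = dihAut n (k * k') ((k : ZMod n) * m' + m) := by
  apply MulEquiv.ext
  rintro (x | x) <;>
    simp only [MulAut.mul_apply, dihAut_sr, dihAut_r, Units.val_mul] <;>
    congr 1 <;> ring

lemma dihAut_one : dihAut n 1 0 = 1 := by
  apply MulEquiv.ext
  rintro (x | x) <;> simp [dihAut_sr, dihAut_r]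

lemma phi_pow (m : ℕ) : (dihAut n 1 1) ^ m = dihAut n 1 (m : ZMod n) := by
  induction m with
  | zero => simpa using (dihAut_one n).symm
  | succ m ih =>
    rw [pow_succ, ih, dihAut_mul]
    push_cast
    congr 1 <;> simp [add_comm]

lemma dihAut_inv (k : (ZMod n)ˣ) (m : ZMod n) :
    (dihAut n k m)⁻¹ = dihAut n k⁻¹ (-(((k⁻¹ : (ZMod n)ˣ) : ZMod n) * m)) := by
  apply MulEquiv.ext
  rintro (x | x) <;> rfl

lemma phi_zpow (m : ℤ) : (dihAut n 1 1) ^ m = dihAut n 1 (m : ZMod n) := by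
  cases m with
  | ofNat m => simpa using phi_pow n m
  | negSucc m =>
    rw [zpow_negSucc, phi_pow, dihAut_inv, inv_one]
    congr 1
    push_cast
    ring

lemma val_natCast' [NeZero n] (j : ZMod n) : ((j.val : ℕ) : ZMod n) = j := by
  rw [ZMod.natCast_val, ZMod.cast_id]

/-- An automorphism fixing `sr 0` and `sr 1` is the identity. -/
lemma eq_one_of_fix [NeZero n] {σ : MulAut (DihedralGroup n)}
    (h0 : σ (.sr 0) = .sr 0) (h1 : σ (.sr 1) = .sr 1) : σ = 1 := by
  have hr1 : σ (.r 1) = .r 1 := by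
    have h := map_mul σ (DihedralGroup.sr 0) (DihedralGroup.sr 1)
    rw [h0, h1] at h
    simpa using h
  have hr : ∀ j : ZMod n, σ (.r j) = .r j := by
    intro j
    rw [← val_natCast' n j, ← DihedralGroup.r_one_pow, map_pow, hr1]
  have hsr : ∀ j : ZMod n, σ (.sr j) = .sr j := by
    intro j
    have h := map_mul σ (DihedralGroup.sr 0) (DihedralGroup.r j)
    rw [h0, hr j] at h
    simpa using h
  apply MulEquiv.ext
  rintro (j | j)
  · simpa using hr j
  · simpa using hsr j

lemma mem_autSub_of {H : Type*} [Group H] {σ : MulAut H} {C : Set H}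
    (h1 : ∀ x ∈ C, σ x ∈ C) (h2 : ∀ x ∈ C, ∃ y ∈ C, σ y = x) : σ ∈ autSub C := by
  show ⇑σ '' C = C
  apply Set.Subset.antisymm
  · rintro _ ⟨x, hx, rfl⟩; exact h1 x hx
  · intro x hx
    obtain ⟨y, hy, hyx⟩ := h2 x hx
    exact ⟨y, hy, hyx⟩

/-- The stabiliser of `{sr 0, sr 1}` is generated by `τ₋₁φ`. -/
lemma autSub_pair (hn : 3 ≤ n) :
    autSub {DihedralGroup.sr (0 : ZMod n), DihedralGroup.sr 1} =
      Subgroup.zpowers (dihAut n (-1) 1) := by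
  haveI : NeZero n := ⟨by omega⟩
  haveI : Fact (1 < n) := ⟨by omega⟩
  have hne : (DihedralGroup.sr (0 : ZMod n)) ≠ .sr 1 := by
    simp only [ne_eq, DihedralGroup.sr.injEq]
    exact zero_ne_one
  have hδ0 : dihAut n (-1) 1 (DihedralGroup.sr (0 : ZMod n)) = .sr 1 := by
    rw [dihAut_sr]; congr 1; ring
  have hδ1 : dihAut n (-1) 1 (DihedralGroup.sr (1 : ZMod n)) = .sr 0 := by
    rw [dihAut_sr]; congr 1
    simp
  apply le_antisymm
  · intro σ hσ
    have hσ' : ⇑σ '' {DihedralGroup.sr (0 : ZMod n), DihedralGroup.sr 1} =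
        {DihedralGroup.sr (0 : ZMod n), DihedralGroup.sr 1} := hσ
    have h0 : σ (.sr 0) ∈ ({DihedralGroup.sr (0 : ZMod n), DihedralGroup.sr 1} :
        Set (DihedralGroup n)) := by
      rw [← hσ']; exact Set.mem_image_of_mem σ (by simp)
    have h1 : σ (.sr 1) ∈ ({DihedralGroup.sr (0 : ZMod n), DihedralGroup.sr 1} :
        Set (DihedralGroup n)) := by
      rw [← hσ']; exact Set.mem_image_of_mem σ (by simp)
    rcases h0 with h0 | h0
    · have h1' : σ (.sr 1) = .sr 1 := by
        rcases h1 with h1 | h1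
        · exact absurd (σ.injective (h1.trans h0.symm)) (by simpa [eq_comm] using hne)
        · exact h1
      rw [eq_one_of_fix n h0 h1']
      exact one_mem _
    · have h1' : σ (.sr 1) = .sr 0 := by
        rcases h1 with h1 | h1
        · exact h1
        · exact absurd (σ.injective (h1.trans h0.symm)) (by simpa using hne)
      have hτ : σ * dihAut n (-1) 1 = 1 := by
        apply eq_one_of_fix n
        · rw [MulAut.mul_apply, hδ0, h1']
        · rw [MulAut.mul_apply, hδ1, h0]
      rw [eq_inv_of_mul_eq_one_right hτ]
      exact inv_mem (Subgroup.mem_zpowers _)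
  · rw [Subgroup.zpowers_le]
    apply mem_autSub_of
    · rintro x (rfl | rfl)
      · rw [hδ0]; simp
      · rw [hδ1]; simp
    · rintro x (rfl | rfl)
      · exact ⟨.sr 1, by simp, hδ1⟩
      · exact ⟨.sr 0, by simp, hδ0⟩

end Aux

/-- If `C = b⟨a^r⟩ ∪ ba^i⟨a^r⟩` is a transitive inverse-closed generating
set of `D_{2n}`, with `Aut(G;C) ∩ ⟨φ⟩ = ⟨φ^r⟩` and `1 ≤ i ≤ r-1`, then `gcd(i,r) = 1` and
there is `k < n` coprime to `n` with `r ∣ k+1` such that `⟨φ^r, τ_k φ^i⟩ ≤ Aut(G;C)` acts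
transitively on `C`; if `r = n` then `C` is equivalent to `{b, ba}`, whose stabiliser is
`⟨τ_{n-1}φ⟩ ≅ Z₂`. -/
theorem stmt12 (n : ℕ) (hn : 3 ≤ n) (C : Set (DihedralGroup n)) (hC : IsTransGenSet C)
    (r : ℕ) (hr : r ∣ n)
    (hA : autSub C ⊓ Subgroup.zpowers (dihAut n 1 1) =
      Subgroup.zpowers ((dihAut n 1 1) ^ r))
    (i : ℕ) (hi1 : 1 ≤ i) (hi2 : i ≤ r - 1)
    (hCdef : C = reflCoset n r 0 ∪ reflCoset n r i) :
    Nat.gcd i r = 1 ∧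
    (∃ k : ℕ, 0 < k ∧ k < n ∧ Nat.Coprime k n ∧ r ∣ (k + 1) ∧
      ∃ u : (ZMod n)ˣ, (u : ZMod n) = (k : ZMod n) ∧
        Subgroup.closure {(dihAut n 1 1) ^ r, dihAut n u (i : ZMod n)} ≤ autSub C ∧
        ∀ c ∈ C, ∀ c' ∈ C,
          ∃ σ ∈ Subgroup.closure {(dihAut n 1 1) ^ r, dihAut n u (i : ZMod n)}, σ c = c') ∧
    (r = n → ∃ σ : MulAut (DihedralGroup n),
      ⇑σ '' C = {DihedralGroup.sr 0, DihedralGroup.sr 1} ∧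
      autSub (⇑σ '' C) = Subgroup.zpowers (dihAut n (-1) 1) ∧
      Nat.card (autSub (⇑σ '' C)) = 2) := by
  haveI hnz : NeZero n := ⟨by omega⟩
  haveI : Fact (1 < n) := ⟨by omega⟩
  have hr0 : r ≠ 0 := by rintro rfl; rw [Nat.zero_dvd] at hr; omega
  have hr2 : 2 ≤ r := by omega
  haveI hrz : NeZero r := ⟨hr0⟩
  obtain ⟨-, -, hgen, -⟩ := hC
  -- Part 1: gcd i r = 1
  have hgcd : Nat.gcd i r = 1 := by
    set H : Subgroup (DihedralGroup n) :=
      { carrier := {x | ∃ a b : ℤ, x = DihedralGroup.r (((a * i + b * r : ℤ)) : ZMod n) ∨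
          x = DihedralGroup.sr (((a * i + b * r : ℤ)) : ZMod n)}
        one_mem' := ⟨0, 0, Or.inl (by simp [DihedralGroup.one_def, -DihedralGroup.r_zero])⟩
        mul_mem' := by
          rintro x y ⟨a, b, rfl | rfl⟩ ⟨c, d, rfl | rfl⟩
          · exact ⟨a + c, b + d, Or.inl (by rw [DihedralGroup.r_mul_r]; congr 1; push_cast; ring)⟩
          · exact ⟨c - a, d - b, Or.inr (by rw [DihedralGroup.r_mul_sr]; congr 1; push_cast; ring)⟩
          · exact ⟨a + c, b + d, Or.inr (by rw [DihedralGroup.sr_mul_r]; congr 1; push_cast; ring)⟩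
          · exact ⟨c - a, d - b, Or.inl (by rw [DihedralGroup.sr_mul_sr]; congr 1; push_cast; ring)⟩
        inv_mem' := by
          rintro x ⟨a, b, rfl | rfl⟩
          · refine ⟨-a, -b, Or.inl ?_⟩
            rw [inv_eq_iff_mul_eq_one, DihedralGroup.r_mul_r, DihedralGroup.one_def]
            congr 1; push_cast; ring
          · refine ⟨a, b, Or.inr ?_⟩
            rw [inv_eq_iff_mul_eq_one, DihedralGroup.sr_mul_sr, DihedralGroup.one_def]
            congr 1; push_cast; ring } with hH
    have hCH : C ⊆ (H : Set (DihedralGroup n)) := by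
      rw [hCdef]
      rintro x (⟨t, rfl⟩ | ⟨t, rfl⟩)
      · exact ⟨0, t, Or.inr (by congr 1; push_cast; ring)⟩
      · exact ⟨1, t, Or.inr (by congr 1; push_cast; ring)⟩
    have htop : (⊤ : Subgroup (DihedralGroup n)) ≤ H := by
      rw [← hgen]; exact (Subgroup.closure_le H).mpr hCH
    obtain ⟨a, b, hab | hab⟩ := htop (Subgroup.mem_top (DihedralGroup.sr 1))
    · exact absurd hab (by simp)
    · have h1 : ((a * i + b * r - 1 : ℤ) : ZMod n) = 0 := by
        have h2 := (DihedralGroup.sr.injEq _ _).mp hab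
        push_cast at h2 ⊢
        linear_combination -h2
      have hdvd : (n : ℤ) ∣ (a * i + b * r - 1) := (ZMod.intCast_zmod_eq_zero_iff_dvd _ n).mp h1
      have hg : (Nat.gcd i r : ℤ) ∣ 1 := by
        have hgi : (Nat.gcd i r : ℤ) ∣ (i : ℤ) := Int.natCast_dvd_natCast.mpr (Nat.gcd_dvd_left i r)
        have hgr : (Nat.gcd i r : ℤ) ∣ (r : ℤ) := Int.natCast_dvd_natCast.mpr (Nat.gcd_dvd_right i r)
        have hgn : (Nat.gcd i r : ℤ) ∣ (n : ℤ) :=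
          dvd_trans hgr (Int.natCast_dvd_natCast.mpr hr)
        have : (Nat.gcd i r : ℤ) ∣ (a * i + b * r - (a * i + b * r - 1)) :=
          dvd_sub (dvd_add (Dvd.dvd.mul_left hgi a) (Dvd.dvd.mul_left hgr b))
            (dvd_trans hgn hdvd)
        simpa using this
      exact Nat.dvd_one.mp (Int.natCast_dvd_natCast.mp (by exact_mod_cast hg))
  -- construct k
  obtain ⟨u, hu⟩ := ZMod.unitsMap_surjective hr (-1)
  set k : ℕ := ((u : ZMod n)).val with hk_def
  have hu_n : ((u : (ZMod n)ˣ) : ZMod n) = ((k : ℕ) : ZMod n) := (val_natCast' n _).symm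
  have hcast : ∀ v : (ZMod n)ˣ, (ZMod.unitsMap hr v : ZMod r) =
      ((((v : ZMod n)).val : ℕ) : ZMod r) := by
    intro v
    rw [ZMod.unitsMap_def]
    simp only [Units.coe_map]
    rw [← val_natCast' n (v : ZMod n)]
    simp [map_natCast]
  have hk4 : r ∣ (k + 1) := by
    have h := congrArg (Units.val) hu
    rw [hcast u] at h
    rw [← hk_def] at h
    have h2 : ((k : ℕ) : ZMod r) = -1 := by rw [h]; simp
    have : ((k + 1 : ℕ) : ZMod r) = 0 := by push_cast; rw [h2]; ring
    exact (ZMod.natCast_eq_zero_iff _ r).mp this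
  set k' : ℕ := (((u⁻¹ : (ZMod n)ˣ) : ZMod n)).val with hk'_def
  have hu'_n : ((u⁻¹ : (ZMod n)ˣ) : ZMod n) = ((k' : ℕ) : ZMod n) := (val_natCast' n _).symm
  have hk'4 : r ∣ (k' + 1) := by
    have h : ZMod.unitsMap hr u⁻¹ = -1 := by rw [map_inv, hu]; simp
    have h := congrArg (Units.val) h
    rw [hcast u⁻¹] at h
    rw [← hk'_def] at h
    have h2 : ((k' : ℕ) : ZMod r) = -1 := by rw [h]; simp
    have : ((k' + 1 : ℕ) : ZMod r) = 0 := by push_cast; rw [h2]; ring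
    exact (ZMod.natCast_eq_zero_iff _ r).mp this
  obtain ⟨w, hw⟩ := hk4
  obtain ⟨w', hw'⟩ := hk'4
  have hwn : ((k : ZMod n) + 1) = (r : ZMod n) * (w : ZMod n) := by
    have : ((k + 1 : ℕ) : ZMod n) = ((r * w : ℕ) : ZMod n) := by rw [hw]
    push_cast at this; linear_combination this
  have hw'n : ((k' : ZMod n) + 1) = (r : ZMod n) * (w' : ZMod n) := by
    have : ((k' + 1 : ℕ) : ZMod n) = ((r * w' : ℕ) : ZMod n) := by rw [hw']
    push_cast at this; linear_combination this
  have hk2 : k < n := ZMod.val_lt _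
  have hk1 : 0 < k := by
    rcases Nat.eq_zero_or_pos k with h | h
    · exfalso
      have h0 : ((u : (ZMod n)ˣ) : ZMod n) = 0 := by rw [hu_n, h]; simp
      have := u.mul_inv
      rw [h0, zero_mul] at this
      exact zero_ne_one this
    · exact h
  have hkcop : Nat.Coprime k n := ZMod.val_coe_unit_coprime u
  -- membership of the two generators in autSub C
  have hmem_phi : (dihAut n 1 1) ^ r ∈ autSub C := by
    rw [phi_pow]
    apply mem_autSub_of
    · intro x hx
      rw [hCdef] at hx ⊢
      rcases hx with ⟨t, rfl⟩ | ⟨t, rfl⟩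
      · exact Or.inl ⟨t + 1, by rw [dihAut_sr]; congr 1; push_cast; ring⟩
      · exact Or.inr ⟨t + 1, by rw [dihAut_sr]; congr 1; push_cast; ring⟩
    · intro x hx
      rw [hCdef] at hx ⊢
      rcases hx with ⟨t, rfl⟩ | ⟨t, rfl⟩
      · exact ⟨.sr (↑(0:ℕ) + ((t - 1 : ℤ) : ZMod n) * r), Or.inl ⟨t - 1, rfl⟩,
          by rw [dihAut_sr]; congr 1; push_cast; ring⟩
      · exact ⟨.sr (↑i + ((t - 1 : ℤ) : ZMod n) * r), Or.inr ⟨t - 1, rfl⟩,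
          by rw [dihAut_sr]; congr 1; push_cast; ring⟩
  have hmem_tau : dihAut n u (i : ZMod n) ∈ autSub C := by
    apply mem_autSub_of
    · intro x hx
      rw [hCdef] at hx ⊢
      rcases hx with ⟨t, rfl⟩ | ⟨t, rfl⟩
      · refine Or.inr ⟨(k : ℤ) * t, ?_⟩
        rw [dihAut_sr, hu_n]; congr 1; push_cast; ring
      · refine Or.inl ⟨(w : ℤ) * i + (k : ℤ) * t, ?_⟩
        rw [dihAut_sr, hu_n]; congr 1; push_cast
        linear_combination (i : ZMod n) * hwn
    · intro x hx
      rw [hCdef] at hx ⊢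
      rcases hx with ⟨t, rfl⟩ | ⟨t, rfl⟩
      · refine ⟨.sr (↑i + (((k' : ℤ) * t - (w' : ℤ) * i : ℤ) : ZMod n) * r),
          Or.inr ⟨(k' : ℤ) * t - (w' : ℤ) * i, rfl⟩, ?_⟩
        rw [dihAut_sr, hu_n]; congr 1; push_cast
        have huk : ((k : ZMod n)) * ((k' : ZMod n)) = 1 := by
          rw [← hu_n, ← hu'_n]; exact u.mul_inv
        linear_combination ((t : ZMod n) * (r : ZMod n) - (i : ZMod n)) * huk + (i : ZMod n) * (k : ZMod n) * hw'n
      · refine ⟨.sr (↑(0:ℕ) + (((k' : ℤ) * t : ℤ) : ZMod n) * r),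
          Or.inl ⟨(k' : ℤ) * t, rfl⟩, ?_⟩
        rw [dihAut_sr, hu_n]; congr 1; push_cast
        have huk : ((k : ZMod n)) * ((k' : ZMod n)) = 1 := by
          rw [← hu_n, ← hu'_n]; exact u.mul_inv
        linear_combination (t : ZMod n) * (r : ZMod n) * huk
  have hclle : Subgroup.closure {(dihAut n 1 1) ^ r, dihAut n u (i : ZMod n)} ≤ autSub C := by
    rw [Subgroup.closure_le]
    rintro x (rfl | rfl)
    · exact hmem_phi
    · exact hmem_tau
  have hφz : ∀ s : ℤ, ((dihAut n 1 1) ^ r) ^ s = dihAut n 1 ((r : ZMod n) * (s : ZMod n)) := by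
    intro s
    rw [← zpow_natCast, ← zpow_mul, phi_zpow]
    congr 1; push_cast; ring
  have hφmem : (dihAut n 1 1) ^ r ∈
      Subgroup.closure {(dihAut n 1 1) ^ r, dihAut n u (i : ZMod n)} :=
    Subgroup.subset_closure (Set.mem_insert _ _)
  have hτmem : dihAut n u (i : ZMod n) ∈
      Subgroup.closure {(dihAut n 1 1) ^ r, dihAut n u (i : ZMod n)} :=
    Subgroup.subset_closure (Set.mem_insert_of_mem _ rfl)
  have htrans : ∀ c ∈ C, ∀ c' ∈ C,
      ∃ σ ∈ Subgroup.closure {(dihAut n 1 1) ^ r, dihAut n u (i : ZMod n)}, σ c = c' := by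
    intro c hc c' hc'
    rw [hCdef] at hc hc'
    rcases hc with ⟨t, rfl⟩ | ⟨t, rfl⟩ <;> rcases hc' with ⟨t', rfl⟩ | ⟨t', rfl⟩
    · refine ⟨((dihAut n 1 1) ^ r) ^ (t' - t), zpow_mem hφmem _, ?_⟩
      rw [hφz, dihAut_sr]; congr 1; push_cast; ring
    · refine ⟨((dihAut n 1 1) ^ r) ^ (t' - (k : ℤ) * t) * dihAut n u (i : ZMod n),
        mul_mem (zpow_mem hφmem _) hτmem, ?_⟩
      rw [MulAut.mul_apply, dihAut_sr, hu_n, hφz, dihAut_sr]; congr 1; push_cast; ring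
    · refine ⟨((dihAut n 1 1) ^ r) ^ (t' - ((w : ℤ) * i + (k : ℤ) * t)) * dihAut n u (i : ZMod n),
        mul_mem (zpow_mem hφmem _) hτmem, ?_⟩
      rw [MulAut.mul_apply, dihAut_sr, hu_n, hφz, dihAut_sr]; congr 1; push_cast
      linear_combination (i : ZMod n) * hwn
    · refine ⟨((dihAut n 1 1) ^ r) ^ (t' - t), zpow_mem hφmem _, ?_⟩
      rw [hφz, dihAut_sr]; congr 1; push_cast; ring
  refine ⟨hgcd, ⟨k, hk1, hk2, hkcop, ⟨w, hw⟩, u, hu_n, hclle, htrans⟩, ?_⟩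
  -- Part 3 : r = n
  intro hrn
  subst hrn
  have hin : Nat.Coprime i r := hgcd
  set v : (ZMod r)ˣ := ZMod.unitOfCoprime i hin with hv_def
  have hv : ((v : (ZMod r)ˣ) : ZMod r) = (i : ZMod r) := ZMod.coe_unitOfCoprime i hin
  refine ⟨dihAut r v⁻¹ 0, ?_, ?_, ?_⟩
  all_goals {
    have hCpair : C = {DihedralGroup.sr ((0:ℕ) : ZMod r), DihedralGroup.sr ((i:ℕ) : ZMod r)} := by
      rw [hCdef]
      have h1 : reflCoset r r 0 = {DihedralGroup.sr ((0:ℕ) : ZMod r)} := by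
        ext x
        simp only [reflCoset, Set.mem_setOf_eq, Set.mem_singleton_iff, ZMod.natCast_self,
          mul_zero, add_zero]
        exact ⟨fun ⟨t, h⟩ => h, fun h => ⟨0, h⟩⟩
      have h2 : reflCoset r r i = {DihedralGroup.sr ((i:ℕ) : ZMod r)} := by
        ext x
        simp only [reflCoset, Set.mem_setOf_eq, Set.mem_singleton_iff, ZMod.natCast_self,
          mul_zero, add_zero]
        exact ⟨fun ⟨t, h⟩ => h, fun h => ⟨0, h⟩⟩
      rw [h1, h2, Set.singleton_union]
    have himg : ⇑(dihAut r v⁻¹ 0) '' C = {DihedralGroup.sr 0, DihedralGroup.sr 1} := by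
      have e0 : dihAut r v⁻¹ 0 (.sr ((0:ℕ) : ZMod r)) = .sr 0 := by
        rw [dihAut_sr]; congr 1; push_cast; ring
      have e1 : dihAut r v⁻¹ 0 (.sr ((i:ℕ) : ZMod r)) = .sr 1 := by
        rw [dihAut_sr]; congr 1; rw [← hv, add_zero]; exact v.inv_mul
      rw [hCpair, Set.image_pair, e0, e1]
    first
    | exact himg
    | (rw [himg]; exact autSub_pair r hn)
    | (rw [himg, autSub_pair r hn, Nat.card_zpowers]
       haveI : Fact (Nat.Prime 2) := ⟨Nat.prime_two⟩
       apply orderOf_eq_prime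
       · rw [pow_two, dihAut_mul, neg_mul_neg, one_mul]
         convert dihAut_one r using 2
         simp
       · intro h
         have h0 := congrArg (fun σ : MulAut (DihedralGroup r) => σ (DihedralGroup.sr 0)) h
         simp only [dihAut_sr, MulAut.one_apply] at h0
         rw [mul_zero, zero_add] at h0
         have : (1 : ZMod r) = 0 := by
           have := (DihedralGroup.sr.injEq _ _).mp h0
           exact this
         exact one_ne_zero this)
  }

end NETCayley
end
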